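/- Gap amplification for PLDs: let A, B, B₁, B₂ be privacy loss distributions such that for i ∈ {1,2}, h_{B_i}(e^{ε_i + u}) < h_B(e^{ε_i + u}) for some ε₁, ε₂ in the support of A and some u ∈ ℝ, where h_L(x) := E_{Z∼L}[max(0, 1 − x e^{-Z})]. Then with ε* := ε₁ + ε₂ + u, one has max(h_{A⊕B₁}(e^{ε*}), h_{A⊕B₂}(e^{ε*})) < h_{A⊕B}(e^{ε*}), where ⊕ denotes convolution of distributions. -/

import Mathlib

open MeasureTheory Filter Set
open scoped ENNReal NNReal

/-- `e^{-z}` for `z : EReal`, valued in `ℝ≥0∞` (with `e^{-∞} = 0`). -/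
noncomputable def expNegE (z : EReal) : ℝ≥0∞ :=
  if z = ⊤ then 0 else if z = ⊥ then ⊤ else ENNReal.ofReal (Real.exp (-z.toReal))

/-- A privacy loss distribution: a probability measure on `ℝ ∪ {∞}` (no mass at `-∞`)
with `E[e^{-Z}] ≤ 1`. -/
def IsPLD (L : Measure EReal) : Prop :=
  IsProbabilityMeasure L ∧ L {⊥} = 0 ∧ ∫⁻ z, expNegE z ∂L ≤ 1

/-- The integrand `max (0, 1 - x e^{-z})` for `z : EReal` (so `z = ∞` gives `1`). -/
noncomputable def hsTerm (x : ℝ) (z : EReal) : ℝ :=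
  if z = ⊤ then 1 else if z = ⊥ then 0 else max 0 (1 - x * Real.exp (-z.toReal))

/-- Hockey-stick curve of a privacy loss distribution:
`h_L(x) = E_{Z∼L}[max (0, 1 - x e^{-Z})]`. -/
noncomputable def hsCurve (L : Measure EReal) (x : ℝ) : ℝ :=
  ∫ z, hsTerm x z ∂L

/-- Convolution of two distributions on the extended reals: the law of `Z₁ + Z₂` for
independent `Z₁ ∼ L₁`, `Z₂ ∼ L₂`. -/
noncomputable def pldConv (L₁ L₂ : Measure EReal) : Measure EReal :=
  (L₁.prod L₂).map (fun p => p.1 + p.2)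

/-- `ε` is in the (real) support of `A`: every neighbourhood of `ε` in `ℝ` has positive
`A`-mass. -/
def InSupp (A : Measure EReal) (ε : ℝ) : Prop :=
  ∀ δ > (0 : ℝ), 0 < A (Set.Ioo ((ε - δ : ℝ) : EReal) ((ε + δ : ℝ) : EReal))

section Helpers

lemma hsTerm_nonneg (x : ℝ) (z : EReal) : 0 ≤ hsTerm x z := by
  unfold hsTerm; split_ifs <;> norm_num

lemma hsTerm_le_one {x : ℝ} (hx : 0 ≤ x) (z : EReal) : hsTerm x z ≤ 1 := by
  unfold hsTerm
  split_ifs with h1 h2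
  · exact le_rfl
  · norm_num
  · have := mul_nonneg hx (Real.exp_pos (-z.toReal)).le
    apply max_le <;> linarith

lemma measurable_hsTerm (x : ℝ) : Measurable (hsTerm x) := by
  unfold hsTerm
  apply Measurable.ite (measurableSet_singleton (⊤ : EReal)) measurable_const
  apply Measurable.ite (measurableSet_singleton (⊥ : EReal)) measurable_const
  have hc : Continuous (fun t : ℝ => max 0 (1 - x * Real.exp (-t))) := by fun_prop
  exact hc.measurable.comp measurable_ereal_toReal

lemma measurable_add_ereal : Measurable (fun p : EReal × EReal => p.1 + p.2) := by
  have he : (fun p : EReal × EReal => p.1 + p.2) = fun p =>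
      if p.1 = ⊥ ∨ p.2 = ⊥ then (⊥ : EReal)
      else if p.1 = ⊤ ∨ p.2 = ⊤ then ⊤
      else ((p.1.toReal + p.2.toReal : ℝ) : EReal) := by
    funext p
    obtain ⟨a, b⟩ := p
    induction a using EReal.rec <;> induction b using EReal.rec <;>
      simp [← EReal.coe_add]
  rw [he]
  have h1 : MeasurableSet {p : EReal × EReal | p.1 = ⊥ ∨ p.2 = ⊥} := by
    have : {p : EReal × EReal | p.1 = ⊥ ∨ p.2 = ⊥}
        = (Prod.fst ⁻¹' {⊥}) ∪ (Prod.snd ⁻¹' {⊥}) := by ext p; simp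
    rw [this]
    exact ((measurableSet_singleton _).preimage measurable_fst).union
      ((measurableSet_singleton _).preimage measurable_snd)
  have h2 : MeasurableSet {p : EReal × EReal | p.1 = ⊤ ∨ p.2 = ⊤} := by
    have : {p : EReal × EReal | p.1 = ⊤ ∨ p.2 = ⊤}
        = (Prod.fst ⁻¹' {⊤}) ∪ (Prod.snd ⁻¹' {⊤}) := by ext p; simp
    rw [this]
    exact ((measurableSet_singleton _).preimage measurable_fst).union
      ((measurableSet_singleton _).preimage measurable_snd)
  refine Measurable.ite h1 measurable_const (Measurable.ite h2 measurable_const ?_)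
  exact measurable_coe_real_ereal.comp
    ((measurable_fst.ereal_toReal).add (measurable_snd.ereal_toReal))

lemma max_sub_le_of_le {x y e : ℝ} (hx : 0 < x) (hxy : x ≤ y) (he : 0 < e) :
    max 0 (1 - y*e) ≤ max 0 (1 - x*e) ∧ max 0 (1 - x*e) - max 0 (1 - y*e) ≤ (y - x)/x := by
  constructor
  · exact max_le_max le_rfl (by nlinarith)
  · rcases le_or_gt (1 - x*e) 0 with h | h
    · rw [max_eq_left h]
      have : (0:ℝ) ≤ (y - x)/x := div_nonneg (by linarith) hx.le
      have h0 : (0:ℝ) ≤ max 0 (1 - y*e) := le_max_left _ _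
      linarith
    · rw [max_eq_right h.le]
      have h2 : 1 - y*e ≤ max 0 (1 - y*e) := le_max_right _ _
      have h3 : x * e < 1 := by linarith
      have h4 : (y - x) * e ≤ (y - x)/x := by
        rw [le_div_iff₀ hx]; nlinarith
      linarith

lemma max_sub_abs_le {x y e : ℝ} (hx : 0 < x) (hy : 0 < y) (he : 0 < e) :
    |max 0 (1 - x*e) - max 0 (1 - y*e)| ≤ |x - y| / min x y := by
  rcases le_total x y with h | h
  · obtain ⟨h1, h2⟩ := max_sub_le_of_le hx h he
    rw [min_eq_left h, abs_of_nonpos (by linarith : x - y ≤ 0),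
      abs_of_nonneg (by linarith : (0:ℝ) ≤ max 0 (1 - x*e) - max 0 (1 - y*e))]
    have : -(x - y) = y - x := by ring
    rw [this]; exact h2
  · obtain ⟨h1, h2⟩ := max_sub_le_of_le hy h he
    rw [min_eq_right h, abs_of_nonneg (by linarith : (0:ℝ) ≤ x - y),
      abs_of_nonpos (by linarith : max 0 (1 - x*e) - max 0 (1 - y*e) ≤ 0)]
    have : -(max 0 (1 - x*e) - max 0 (1 - y*e)) = max 0 (1 - y*e) - max 0 (1 - x*e) := by ring
    rw [this]; exact h2

lemma hsTerm_sub_abs_le {x y : ℝ} (hx : 0 < x) (hy : 0 < y) (z : EReal) :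
    |hsTerm x z - hsTerm y z| ≤ |x - y| / min x y := by
  have hrhs : (0:ℝ) ≤ |x - y| / min x y := div_nonneg (abs_nonneg _) (lt_min hx hy).le
  unfold hsTerm
  split_ifs with h1 h2
  · simpa using hrhs
  · simpa using hrhs
  · exact max_sub_abs_le hx hy (Real.exp_pos _)

lemma integrable_hsTerm {L : Measure EReal} [IsFiniteMeasure L] {x : ℝ} (hx : 0 ≤ x) :
    Integrable (hsTerm x) L := by
  refine (integrable_const (1:ℝ)).mono' (measurable_hsTerm x).aestronglyMeasurable ?_
  filter_upwards with z
  rw [Real.norm_eq_abs, abs_of_nonneg (hsTerm_nonneg x z)]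
  exact hsTerm_le_one hx z

lemma hsCurve_nonneg (L : Measure EReal) (x : ℝ) : 0 ≤ hsCurve L x :=
  integral_nonneg (hsTerm_nonneg x)

lemma hsCurve_le_one {L : Measure EReal} [IsProbabilityMeasure L] {x : ℝ} (hx : 0 ≤ x) :
    hsCurve L x ≤ 1 := by
  have := integral_mono (μ := L) (integrable_hsTerm hx) (integrable_const 1)
    (hsTerm_le_one hx)
  simpa [hsCurve] using this

lemma hsCurve_sub_abs_le {L : Measure EReal} [IsProbabilityMeasure L] {x y : ℝ}
    (hx : 0 < x) (hy : 0 < y) :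
    |hsCurve L x - hsCurve L y| ≤ |x - y| / min x y := by
  rw [hsCurve, hsCurve, ← integral_sub (integrable_hsTerm hx.le) (integrable_hsTerm hy.le)]
  calc |∫ z, (hsTerm x z - hsTerm y z) ∂L| ≤ ∫ z, |hsTerm x z - hsTerm y z| ∂L := by
        simpa [Real.norm_eq_abs] using
          norm_integral_le_integral_norm (μ := L) (f := fun z => hsTerm x z - hsTerm y z)
    _ ≤ ∫ _z, |x - y| / min x y ∂L := by
        refine integral_mono (((integrable_hsTerm hx.le).sub (integrable_hsTerm hy.le)).abs)
          (integrable_const _) (fun z => hsTerm_sub_abs_le hx hy z)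
    _ = |x - y| / min x y := by simp

lemma hsCurve_continuousAt {L : Measure EReal} [IsProbabilityMeasure L] {x : ℝ} (hx : 0 < x) :
    ContinuousAt (hsCurve L) x := by
  rw [Metric.continuousAt_iff]
  intro ε hε
  refine ⟨min (x/2) (ε*x/4), by positivity, fun {y} hy => ?_⟩
  rw [Real.dist_eq] at *
  have h1 : |y - x| < x/2 := lt_of_lt_of_le hy (min_le_left _ _)
  have h2 : |y - x| < ε*x/4 := lt_of_lt_of_le hy (min_le_right _ _)
  obtain ⟨ha, hb⟩ := abs_lt.1 h1
  have hy0 : 0 < y := by linarith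
  have hmin : x/2 ≤ min x y := le_min (by linarith) (by linarith)
  have hmin0 : (0:ℝ) < x/2 := by linarith
  have hmin' : x/2 ≤ min y x := le_min (by linarith) (by linarith)
  calc |hsCurve L y - hsCurve L x| ≤ |y - x| / min y x := hsCurve_sub_abs_le hy0 hx
    _ ≤ |y - x| / (x/2) := by gcongr
    _ < (ε*x/4) / (x/2) := by
        apply div_lt_div_of_pos_right h2 hmin0
    _ = ε/2 := by field_simp; ring
    _ < ε := by linarith

end Helpers
section Conv

lemma hsTerm_real_add (x : ℝ) (a : ℝ) (b : EReal) :
    hsTerm x ((a : EReal) + b) = hsTerm (x * Real.exp (-a)) b := by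
  induction b using EReal.rec with
  | bot => simp [hsTerm]
  | coe b =>
      have h1 : ((a : EReal) + (b : EReal)) = ((a + b : ℝ) : EReal) := by
        rw [← EReal.coe_add]
      rw [h1]
      simp only [hsTerm, EReal.coe_ne_top, EReal.coe_ne_bot, if_false, EReal.toReal_coe]
      have h2 : Real.exp (-(a+b)) = Real.exp (-a) * Real.exp (-b) := by
        rw [← Real.exp_add]; ring_nf
      rw [h2]; ring_nf
  | top => simp [hsTerm]

lemma hsTerm_top_add (x : ℝ) (b : EReal) :
    hsTerm x ((⊤ : EReal) + b) = if b = ⊥ then 0 else 1 := by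
  induction b using EReal.rec with
  | bot => simp [hsTerm]
  | coe b => simp [hsTerm, EReal.top_add_coe]
  | top => simp [hsTerm]

/-- The inner curve after integrating out `B'`. -/
noncomputable def gcurve (B' : Measure EReal) (x : ℝ) (a : EReal) : ℝ :=
  if a = ⊤ then 1 else if a = ⊥ then 0 else hsCurve B' (x * Real.exp (-a.toReal))

lemma hsCurve_pldConv (A B' : Measure EReal) (hA : IsPLD A) (hB' : IsPLD B')
    {x : ℝ} (hx : 0 ≤ x) :
    hsCurve (pldConv A B') x = ∫ a, gcurve B' x a ∂A := by
  haveI := hA.1; haveI := hB'.1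
  rw [hsCurve, pldConv,
    integral_map measurable_add_ereal.aemeasurable (measurable_hsTerm x).aestronglyMeasurable]
  have hint : Integrable (fun p : EReal × EReal => hsTerm x (p.1 + p.2)) (A.prod B') := by
    refine (integrable_const (1:ℝ)).mono'
      ((measurable_hsTerm x).comp measurable_add_ereal).aestronglyMeasurable ?_
    filter_upwards with p
    rw [Real.norm_eq_abs, abs_of_nonneg (hsTerm_nonneg _ _)]
    exact hsTerm_le_one hx _
  rw [MeasureTheory.integral_prod _ hint]
  refine integral_congr_ae (Filter.Eventually.of_forall fun a => ?_)
  induction a using EReal.rec with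
  | bot =>
      simp only [gcurve, if_neg (by simp : (⊥:EReal) ≠ ⊤), if_pos rfl]
      have : ∀ b : EReal, hsTerm x ((⊥ : EReal) + b) = 0 := by
        intro b; rw [EReal.bot_add]; simp [hsTerm]
      simp [this, hsTerm]
  | coe a =>
      simp only [gcurve, if_neg (EReal.coe_ne_top a), if_neg (EReal.coe_ne_bot a),
        EReal.toReal_coe]
      rw [hsCurve]
      refine integral_congr_ae (Filter.Eventually.of_forall fun b => ?_)
      exact hsTerm_real_add x a b
  | top =>
      simp only [gcurve, if_pos rfl]
      have hae : (fun b => hsTerm x ((⊤ : EReal) + b)) =ᵐ[B'] fun _ => (1:ℝ) := by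
        have hnull : B' {⊥} = 0 := hB'.2.1
        filter_upwards [measure_eq_zero_iff_ae_notMem.mp hnull] with b hb
        rw [hsTerm_top_add, if_neg (by simpa using hb)]
      rw [integral_congr_ae hae]
      simp

lemma measurable_gcurve (B' : Measure EReal) [IsProbabilityMeasure B'] {x : ℝ} (hx : 0 < x) :
    Measurable (gcurve B' x) := by
  unfold gcurve
  apply Measurable.ite (measurableSet_singleton (⊤ : EReal)) measurable_const
  apply Measurable.ite (measurableSet_singleton (⊥ : EReal)) measurable_const
  have hc : Continuous (fun t : ℝ => hsCurve B' (x * Real.exp (-t))) := by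
    rw [continuous_iff_continuousAt]
    intro t
    exact (hsCurve_continuousAt (by positivity)).comp (by fun_prop)
  exact hc.measurable.comp measurable_ereal_toReal

lemma gcurve_nonneg (B' : Measure EReal) (x : ℝ) (a : EReal) : 0 ≤ gcurve B' x a := by
  unfold gcurve; split_ifs with h1 h2
  · norm_num
  · exact le_rfl
  · exact hsCurve_nonneg _ _

lemma gcurve_le_one (B' : Measure EReal) [IsProbabilityMeasure B'] {x : ℝ} (hx : 0 ≤ x)
    (a : EReal) : gcurve B' x a ≤ 1 := by
  unfold gcurve; split_ifs with h1 h2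
  · exact le_rfl
  · norm_num
  · exact hsCurve_le_one (by positivity)

lemma integrable_gcurve (A B' : Measure EReal) [IsFiniteMeasure A] [IsProbabilityMeasure B']
    {x : ℝ} (hx : 0 < x) : Integrable (gcurve B' x) A := by
  refine (integrable_const (1:ℝ)).mono' (measurable_gcurve B' hx).aestronglyMeasurable ?_
  filter_upwards with a
  rw [Real.norm_eq_abs, abs_of_nonneg (gcurve_nonneg B' x a)]
  exact gcurve_le_one B' hx.le a

end Conv
lemma pldConv_gap (A B B' : Measure EReal) (hA : IsPLD A) (hB : IsPLD B) (hB' : IsPLD B')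
    (hdom : ∀ x > (0:ℝ), hsCurve B' x ≤ hsCurve B x)
    (ε η : ℝ) (hε : InSupp A ε)
    (hgap : hsCurve B' (Real.exp η) < hsCurve B (Real.exp η)) :
    hsCurve (pldConv A B') (Real.exp (ε + η)) < hsCurve (pldConv A B) (Real.exp (ε + η)) := by
  haveI := hA.1; haveI := hB.1; haveI := hB'.1
  set x := Real.exp (ε + η) with hxdef
  have hx : 0 < x := Real.exp_pos _
  rw [hsCurve_pldConv A B' hA hB' hx.le, hsCurve_pldConv A B hA hB hx.le]
  set c := (hsCurve B (Real.exp η) - hsCurve B' (Real.exp η)) / 2 with hcdef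
  have hc : 0 < c := by rw [hcdef]; linarith
  set φ : ℝ → ℝ :=
    fun a => hsCurve B (x * Real.exp (-a)) - hsCurve B' (x * Real.exp (-a)) with hφ
  have hxε : x * Real.exp (-ε) = Real.exp η := by
    rw [hxdef, ← Real.exp_add]; ring_nf
  have hφε : φ ε = 2 * c := by
    rw [hφ]; simp only [hxε]; rw [hcdef]; ring
  have hcont : ContinuousAt φ ε := by
    have h1 : ∀ (L : Measure EReal), IsProbabilityMeasure L →
        ContinuousAt (fun a : ℝ => hsCurve L (x * Real.exp (-a))) ε := by
      intro L hL
      haveI := hL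
      exact (hsCurve_continuousAt (by positivity)).comp (by fun_prop)
    exact (h1 B hB.1).sub (h1 B' hB'.1)
  obtain ⟨δ, hδ, hball⟩ := Metric.continuousAt_iff.mp hcont c hc
  have hφgt : ∀ a : ℝ, |a - ε| < δ → c ≤ φ a := by
    intro a ha
    have h2 := hball (by rwa [Real.dist_eq])
    rw [Real.dist_eq, hφε] at h2
    have h3 := abs_lt.1 h2
    linarith [h3.1]
  set S : Set EReal := Set.Ioo ((ε - δ : ℝ) : EReal) ((ε + δ : ℝ) : EReal) with hS
  have hSmeas : MeasurableSet S := measurableSet_Ioo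
  have hSpos : 0 < A S := hε δ hδ
  have hpt : ∀ a : EReal, S.indicator (fun _ => c) a ≤ gcurve B x a - gcurve B' x a := by
    intro a
    have hle : gcurve B' x a ≤ gcurve B x a := by
      unfold gcurve; split_ifs
      · exact le_rfl
      · exact le_rfl
      · exact hdom _ (by positivity)
    by_cases ha : a ∈ S
    · rw [Set.indicator_of_mem ha]
      obtain ⟨h1, h2⟩ := ha
      have hne_bot : a ≠ ⊥ := by rintro rfl; exact absurd h1 (by simp)
      have hne_top : a ≠ ⊤ := by rintro rfl; exact absurd h2 (by simp)
      have hcoe : ((a.toReal : ℝ) : EReal) = a := EReal.coe_toReal hne_top hne_bot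
      have hr1 : ε - δ < a.toReal := by rw [← EReal.coe_lt_coe_iff, hcoe]; exact h1
      have hr2 : a.toReal < ε + δ := by rw [← EReal.coe_lt_coe_iff, hcoe]; exact h2
      have habs : |a.toReal - ε| < δ := abs_lt.2 ⟨by linarith, by linarith⟩
      have h4 := hφgt a.toReal habs
      unfold gcurve
      rw [if_neg hne_top, if_neg hne_bot, if_neg hne_top, if_neg hne_bot]
      have h5 : c ≤ hsCurve B (x * Real.exp (-a.toReal)) - hsCurve B' (x * Real.exp (-a.toReal)) := h4
      linarith
    · rw [Set.indicator_of_notMem ha]; linarith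
  have hind : Integrable (S.indicator (fun _ => c)) A := (integrable_const c).indicator hSmeas
  have hsub : Integrable (fun a => gcurve B x a - gcurve B' x a) A :=
    (integrable_gcurve A B hx).sub (integrable_gcurve A B' hx)
  have hlow : (A S).toReal * c ≤ ∫ a, (gcurve B x a - gcurve B' x a) ∂A := by
    have h5 := integral_mono hind hsub hpt
    rwa [integral_indicator_const _ hSmeas, smul_eq_mul] at h5
  have hfin : 0 < (A S).toReal := ENNReal.toReal_pos hSpos.ne' (measure_ne_top A S)
  have hmul : 0 < (A S).toReal * c := mul_pos hfin hc
  have heq : ∫ a, (gcurve B x a - gcurve B' x a) ∂A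
      = ∫ a, gcurve B x a ∂A - ∫ a, gcurve B' x a ∂A :=
    integral_sub (integrable_gcurve A B hx) (integrable_gcurve A B' hx)
  rw [heq] at hlow
  linarith
/-- Gap amplification for PLDs: if `B₁, B₂` are dominated by `B` with a strict
hockey-stick gap at `e^{ε₁+u}` and `e^{ε₂+u}` respectively, where `ε₁, ε₂ ∈ supp A`,
then at `ε* = ε₁ + ε₂ + u`,
`max (h_{A⊕B₁}(e^{ε*}), h_{A⊕B₂}(e^{ε*})) < h_{A⊕B}(e^{ε*})`. -/
theorem stmt14 (A B B₁ B₂ : Measure EReal)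
    (hA : IsPLD A) (hB : IsPLD B) (hB₁ : IsPLD B₁) (hB₂ : IsPLD B₂)
    (hdom₁ : ∀ x > (0 : ℝ), hsCurve B₁ x ≤ hsCurve B x)
    (hdom₂ : ∀ x > (0 : ℝ), hsCurve B₂ x ≤ hsCurve B x)
    (ε₁ ε₂ u : ℝ) (hε₁ : InSupp A ε₁) (hε₂ : InSupp A ε₂)
    (hgap₁ : hsCurve B₁ (Real.exp (ε₁ + u)) < hsCurve B (Real.exp (ε₁ + u)))
    (hgap₂ : hsCurve B₂ (Real.exp (ε₂ + u)) < hsCurve B (Real.exp (ε₂ + u))) :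
    max (hsCurve (pldConv A B₁) (Real.exp (ε₁ + ε₂ + u)))
        (hsCurve (pldConv A B₂) (Real.exp (ε₁ + ε₂ + u))) <
      hsCurve (pldConv A B) (Real.exp (ε₁ + ε₂ + u)) := by
  have k1 : hsCurve (pldConv A B₁) (Real.exp (ε₁ + ε₂ + u)) <
      hsCurve (pldConv A B) (Real.exp (ε₁ + ε₂ + u)) := by
    have h := pldConv_gap A B B₁ hA hB hB₁ hdom₁ ε₂ (ε₁ + u) hε₂ hgap₁
    rwa [show ε₂ + (ε₁ + u) = ε₁ + ε₂ + u by ring] at h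
  have k2 : hsCurve (pldConv A B₂) (Real.exp (ε₁ + ε₂ + u)) <
      hsCurve (pldConv A B) (Real.exp (ε₁ + ε₂ + u)) := by
    have h := pldConv_gap A B B₂ hA hB hB₂ hdom₂ ε₁ (ε₂ + u) hε₁ hgap₂
    rwa [show ε₁ + (ε₂ + u) = ε₁ + ε₂ + u by ring] at h
  exact max_lt k1 k2
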